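/- Let L/K be a finite Galois extension. Each g ∈ Gal(L/K) determines an L-algebra homomorphism ev_g : A(L/K) ⊗_K L → L extending f ↦ f(g), and the map g ↦ ev_g is a bijection from Gal(L/K) to the set of L-algebra homomorphisms A(L/K) ⊗_K L → L. Equivalently, the natural map A(L/K) ⊗_K L → Maps(Gal(L/K), L) is an isomorphism of L-algebras. -/

import Mathlib

open scoped TensorProduct
set_option synthInstance.maxHeartbeats 400000

/-- The `K`-subalgebra `A(L/K)` of `Maps(Gal(L/K), L)`. -/
def galSubalg (K L : Type*) [Field K] [Field L] [Algebra K L] :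
    Subalgebra K ((L ≃ₐ[K] L) → L) where
  carrier := {f | ∀ σ τ : L ≃ₐ[K] L, σ (f (σ⁻¹ * τ * σ)) = f τ}
  mul_mem' := fun hf hg σ τ => by
    simp only [Pi.mul_apply, map_mul, hf σ τ, hg σ τ]
  add_mem' := fun hf hg σ τ => by
    simp only [Pi.add_apply, map_add, hf σ τ, hg σ τ]
  one_mem' := fun σ τ => by simp
  zero_mem' := fun σ τ => by simp
  algebraMap_mem' := fun r σ τ => by simp [Pi.algebraMap_apply]

set_option maxHeartbeats 1000000

namespace BCI
variable {K L : Type*} [Field K] [Field L] [Algebra K L]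

lemma welldef (g σ ρ : L ≃ₐ[K] L) (x : L)
    (hx : x ∈ IntermediateField.fixedField (Subgroup.centralizer {g}))
    (h : σ * g * σ⁻¹ = ρ * g * ρ⁻¹) : σ x = ρ x := by
  have hz : ρ⁻¹ * σ ∈ Subgroup.centralizer ({g} : Set (L ≃ₐ[K] L)) := by
    rw [Subgroup.mem_centralizer_iff]
    rintro y hy
    rw [Set.mem_singleton_iff] at hy
    rw [hy]
    have h2 : ρ⁻¹ * (σ * g * σ⁻¹) * σ = ρ⁻¹ * (ρ * g * ρ⁻¹) * σ := by rw [h]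
    calc g * (ρ⁻¹ * σ) = ρ⁻¹ * (ρ * g * ρ⁻¹) * σ := by group
    _ = ρ⁻¹ * (σ * g * σ⁻¹) * σ := h2.symm
    _ = (ρ⁻¹ * σ) * g := by group
  have hfix : (ρ⁻¹ * σ) x = x := hx ⟨ρ⁻¹ * σ, hz⟩
  have h3 : ρ * (ρ⁻¹ * σ) = σ := by group
  calc σ x = (ρ * (ρ⁻¹ * σ)) x := by rw [h3]
  _ = ρ ((ρ⁻¹ * σ) x) := rfl
  _ = ρ x := by rw [hfix]

open Classical in
noncomputable def classFun (g : L ≃ₐ[K] L) (x : L) : (L ≃ₐ[K] L) → L :=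
  fun τ => if h : ∃ σ : L ≃ₐ[K] L, σ * g * σ⁻¹ = τ then h.choose x else 0

lemma classFun_eval (g : L ≃ₐ[K] L) (x : L)
    (hx : x ∈ IntermediateField.fixedField (Subgroup.centralizer {g}))
    {τ ρ : L ≃ₐ[K] L} (hρ : ρ * g * ρ⁻¹ = τ) : classFun g x τ = ρ x := by
  have h : ∃ σ : L ≃ₐ[K] L, σ * g * σ⁻¹ = τ := ⟨ρ, hρ⟩
  rw [classFun, dif_pos h]
  exact welldef g h.choose ρ x hx (h.choose_spec.trans hρ.symm)

lemma classFun_of_ne (g : L ≃ₐ[K] L) (x : L) {τ : L ≃ₐ[K] L}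
    (h : ¬ ∃ σ : L ≃ₐ[K] L, σ * g * σ⁻¹ = τ) : classFun g x τ = 0 := dif_neg h

lemma classFun_self (g : L ≃ₐ[K] L) (x : L)
    (hx : x ∈ IntermediateField.fixedField (Subgroup.centralizer {g})) :
    classFun g x g = x := by
  rw [classFun_eval g x hx (ρ := 1) (by group)]
  rfl

lemma classFun_mem (g : L ≃ₐ[K] L) (x : L)
    (hx : x ∈ IntermediateField.fixedField (Subgroup.centralizer {g})) :
    classFun g x ∈ galSubalg K L := by
  intro σ τ
  by_cases h : ∃ ρ : L ≃ₐ[K] L, ρ * g * ρ⁻¹ = τ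
  · obtain ⟨ρ, rfl⟩ := h
    rw [classFun_eval g x hx (ρ := σ⁻¹ * ρ) (by group), classFun_eval g x hx (ρ := ρ) rfl,
      ← AlgEquiv.mul_apply]
    congr 1
    group
  · rw [classFun_of_ne g x h, classFun_of_ne g x, map_zero]
    rintro ⟨ρ, hρ⟩
    exact h ⟨σ * ρ, by rw [show σ * ρ * g * (σ * ρ)⁻¹ = σ * (ρ * g * ρ⁻¹) * σ⁻¹ by group, hρ]; group⟩


lemma separates [FiniteDimensional K L] (g g' : L ≃ₐ[K] L)
    (h : ∀ f : galSubalg K L, (f : (L ≃ₐ[K] L) → L) g = (f : (L ≃ₐ[K] L) → L) g') :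
    g = g' := by
  by_cases hc : ∃ σ : L ≃ₐ[K] L, σ * g * σ⁻¹ = g'
  · obtain ⟨σ, rfl⟩ := hc
    have hσ : σ ∈ IntermediateField.fixingSubgroup
        (IntermediateField.fixedField (Subgroup.centralizer {g})) := by
      rw [IntermediateField.fixingSubgroup, mem_fixingSubgroup_iff]
      intro y hy
      have h1 := h ⟨classFun g y, classFun_mem g y hy⟩
      have h2 : classFun g y g = y := classFun_self g y hy
      have h3 : classFun g y (σ * g * σ⁻¹) = σ y := classFun_eval g y hy rfl
      change classFun g y g = classFun g y (σ * g * σ⁻¹) at h1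
      rw [h2, h3] at h1
      exact h1.symm
    rw [IntermediateField.fixingSubgroup_fixedField] at hσ
    have hcomm := Subgroup.mem_centralizer_iff.mp hσ g (Set.mem_singleton g)
    have hgg : σ * g * σ⁻¹ = g := by rw [← hcomm]; group
    exact hgg.symm
  · have h1 := h ⟨classFun g 1, classFun_mem g 1 (one_mem _)⟩
    change classFun g 1 g = classFun g 1 g' at h1
    rw [classFun_self g 1 (one_mem _), classFun_of_ne g 1 hc] at h1
    exact absurd h1 one_ne_zero


open Classical in
noncomputable def resHom (σ : L ≃ₐ[K] L) (E : IntermediateField K L) : E →* L :=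
  ((σ.toAlgHom.comp E.val) : E →ₐ[K] L).toRingHom.toMonoidHom

lemma resHom_apply (σ : L ≃ₐ[K] L) (E : IntermediateField K L) (x : E) :
    resHom σ E x = σ x := rfl

open Classical in
lemma span_top [FiniteDimensional K L] [IsGalois K L] :
    Submodule.span L ((galSubalg K L : Set ((L ≃ₐ[K] L) → L))) = ⊤ := by
  by_contra hne
  obtain ⟨v, hv⟩ : ∃ v : (L ≃ₐ[K] L) → L,
      v ∉ Submodule.span L ((galSubalg K L : Set ((L ≃ₐ[K] L) → L))) := by
    by_contra hall
    push_neg at hall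
    exact hne (Submodule.eq_top_iff'.mpr hall)
  set p := Submodule.span L ((galSubalg K L : Set ((L ≃ₐ[K] L) → L))) with hp
  -- build a functional vanishing on p but not on v
  set π := p.mkQ with hπ
  have hπv : π v ≠ 0 := by
    intro h0
    exact hv ((Submodule.Quotient.mk_eq_zero p).mp h0)
  obtain ⟨φ', hφ'⟩ : ∃ φ' : Module.Dual L (((L ≃ₐ[K] L) → L) ⧸ p), φ' (π v) ≠ 0 := by
    by_contra hall
    push_neg at hall
    exact hπv ((Module.forall_dual_apply_eq_zero_iff L (π v)).mp hall)
  set φ : ((L ≃ₐ[K] L) → L) →ₗ[L] L := φ'.comp π with hφdef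
  have hφ0 : ∀ f ∈ galSubalg K L, φ f = 0 := by
    intro f hf
    have : π f = 0 := (Submodule.Quotient.mk_eq_zero p).mpr (Submodule.subset_span hf)
    simp [hφdef, this]
  set c : (L ≃ₐ[K] L) → L := fun τ => φ (Pi.single τ 1) with hc
  have hexp : ∀ w : (L ≃ₐ[K] L) → L, φ w = ∑ τ, w τ * c τ := by
    intro w
    conv_lhs => rw [← Finset.univ_sum_single w]
    rw [map_sum]
    congr 1
    funext τ
    have : Pi.single τ (w τ) = w τ • (Pi.single τ (1 : L) : (L ≃ₐ[K] L) → L) := by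
      funext j
      by_cases hj : j = τ <;> simp [hj, Pi.single_apply]
    rw [this, map_smul, smul_eq_mul]
  -- every coefficient vanishes
  have hc0 : ∀ g : L ≃ₐ[K] L, c g = 0 := by
    intro g
    set E := IntermediateField.fixedField (Subgroup.centralizer {g}) with hE
    set ppred : (L ≃ₐ[K] L) → Prop := fun τ => ∃ σ : L ≃ₐ[K] L, σ * g * σ⁻¹ = τ with hpp
    set ψ : Subtype ppred → (E →* L) := fun τ => resHom τ.2.choose E with hψ
    have hψeval : ∀ (τ : Subtype ppred) (x : E), ψ τ x = classFun g (x : L) τ.1 := by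
      intro τ x
      rw [hψ, resHom_apply, classFun_eval g (x : L) x.2 τ.2.choose_spec]
    have hψinj : Function.Injective ψ := by
      intro τ τ' hψeq
      have hagree : ∀ x : E, τ.2.choose (x : L) = τ'.2.choose (x : L) := by
        intro x
        have := congrArg (fun m => m x) hψeq
        simpa [hψ, resHom_apply] using this
      have hzmem : (τ'.2.choose)⁻¹ * τ.2.choose ∈ Subgroup.centralizer ({g} : Set (L ≃ₐ[K] L)) := by
        rw [← IntermediateField.fixingSubgroup_fixedField (Subgroup.centralizer ({g} : Set (L ≃ₐ[K] L))), IntermediateField.fixingSubgroup, mem_fixingSubgroup_iff]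
        intro y hy
        have h1 : τ.2.choose y = τ'.2.choose y := hagree ⟨y, hy⟩
        show ((τ'.2.choose)⁻¹ * τ.2.choose) y = y
        rw [AlgEquiv.mul_apply, h1, ← AlgEquiv.mul_apply]
        simp
      have hcomm := Subgroup.mem_centralizer_iff.mp hzmem g (Set.mem_singleton g)
      -- conclude τ.1 = τ'.1
      apply Subtype.ext
      rw [← τ.2.choose_spec, ← τ'.2.choose_spec]
      set a := τ.2.choose
      set b := τ'.2.choose
      -- hcomm : g * (b⁻¹ * a) = (b⁻¹ * a) * g
      have : a * g = b * (g * (b⁻¹ * a)) := by rw [hcomm]; group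
      calc a * g * a⁻¹ = (a * g) * a⁻¹ := rfl
      _ = (b * (g * (b⁻¹ * a))) * a⁻¹ := by rw [this]
      _ = b * g * b⁻¹ := by group
    have hli : LinearIndependent L (fun τ : Subtype ppred => ((ψ τ : E →* L) : E → L)) :=
      (linearIndependent_monoidHom E L).comp ψ hψinj
    have hrel : ∑ τ : Subtype ppred, (c τ.1) • ((ψ τ : E →* L) : E → L) = 0 := by
      funext x
      have hcf : ∀ τ : L ≃ₐ[K] L, c τ * classFun g (x : L) τ ≠ 0 → ppred τ := by
        intro τ hne'
        by_contra hnp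
        rw [classFun_of_ne g (x : L) hnp, mul_zero] at hne'
        exact hne' rfl
      have h1 : ∑ τ : Subtype ppred, c τ.1 * classFun g (x : L) τ.1
          = ∑ τ ∈ Finset.univ.filter ppred, c τ * classFun g (x : L) τ := by
        rw [Finset.sum_subtype (p := ppred) (Finset.univ.filter ppred)
          (fun τ => by simp) (fun τ => c τ * classFun g (x : L) τ)]
      have h2 : ∑ τ ∈ Finset.univ.filter ppred, c τ * classFun g (x : L) τ
          = ∑ τ, c τ * classFun g (x : L) τ :=
        Finset.sum_filter_of_ne (fun τ _ h => hcf τ h)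
      have h3 : ∑ τ, c τ * classFun g (x : L) τ = 0 := by
        have := hφ0 (classFun g (x : L)) (classFun_mem g (x : L) x.2)
        rw [hexp] at this
        rw [← this]
        congr 1
        funext τ
        ring
      calc (∑ τ : Subtype ppred, (c τ.1) • ((ψ τ : E →* L) : E → L)) x
          = ∑ τ : Subtype ppred, c τ.1 * ψ τ x := by
            simp [Finset.sum_apply]
      _ = ∑ τ : Subtype ppred, c τ.1 * classFun g (x : L) τ.1 := by
            congr 1; funext τ; rw [hψeval]
      _ = 0 := by rw [h1, h2, h3]
    have := Fintype.linearIndependent_iff.mp hli (fun τ => c τ.1) hrel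
      ⟨g, ⟨1, by group⟩⟩
    exact this
  have : φ v = 0 := by
    rw [hexp]
    simp [hc0]
  exact hφ' this


lemma li_of_ki [FiniteDimensional K L] [IsGalois K L] {ι : Type*} [Fintype ι]
    (b : ι → galSubalg K L) (hb : LinearIndependent K b) :
    LinearIndependent L (fun i => ((b i : (L ≃ₐ[K] L) → L))) := by
  classical
  rw [Fintype.linearIndependent_iff]
  have key : ∀ s : Finset ι, ∀ c : ι → L, (∀ i, i ∉ s → c i = 0) →
      (∑ i, c i • ((b i : (L ≃ₐ[K] L) → L))) = 0 → ∀ i, c i = 0 := by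
    intro s
    induction s using Finset.strongInduction with
    | _ s ih =>
      intro c hsupp hsum
      by_contra hcne
      push_neg at hcne
      obtain ⟨i₀, hi₀⟩ := hcne
      have hi₀s : i₀ ∈ s := by
        by_contra hmem
        exact hi₀ (hsupp _ hmem)
      set c' : ι → L := fun i => (c i₀)⁻¹ * c i with hc'
      have hc'i₀ : c' i₀ = 1 := inv_mul_cancel₀ hi₀
      have hsum' : (∑ i, c' i • ((b i : (L ≃ₐ[K] L) → L))) = 0 := by
        have : (∑ i, c' i • ((b i : (L ≃ₐ[K] L) → L)))
            = (c i₀)⁻¹ • ∑ i, c i • ((b i : (L ≃ₐ[K] L) → L)) := by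
          rw [Finset.smul_sum]
          congr 1
          funext i
          rw [smul_smul]
        rw [this, hsum, smul_zero]
      have hfix : ∀ (σ : L ≃ₐ[K] L) (i : ι), σ (c' i) = c' i := by
        intro σ
        have hσsum : (∑ i, σ (c' i) • ((b i : (L ≃ₐ[K] L) → L))) = 0 := by
          funext τ
          have hev := congrFun hsum' (σ⁻¹ * τ * σ)
          rw [Finset.sum_apply] at hev
          simp only [Pi.smul_apply, smul_eq_mul, Pi.zero_apply] at hev
          show (∑ i, σ (c' i) • ((b i : (L ≃ₐ[K] L) → L))) τ = (0 : (L ≃ₐ[K] L) → L) τ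
          rw [Finset.sum_apply, Pi.zero_apply]
          calc ∑ i, (σ (c' i) • ((b i : (L ≃ₐ[K] L) → L))) τ
              = ∑ i, σ (c' i * (b i : (L ≃ₐ[K] L) → L) (σ⁻¹ * τ * σ)) :=
                Finset.sum_congr rfl (fun i _ => by
                  rw [Pi.smul_apply, smul_eq_mul, ← (b i).2 σ τ, ← map_mul])
          _ = σ (∑ i, c' i * (b i : (L ≃ₐ[K] L) → L) (σ⁻¹ * τ * σ)) := (map_sum σ _ _).symm
          _ = σ 0 := by rw [hev]
          _ = 0 := map_zero σ
        have hd := ih (s.erase i₀) (Finset.erase_ssubset hi₀s)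
          (fun i => σ (c' i) - c' i)
          (by
            intro i hi
            by_cases his : i ∈ s
            · have : i = i₀ := by
                by_contra hne
                exact hi (Finset.mem_erase.mpr ⟨hne, his⟩)
              show σ (c' i) - c' i = 0
              rw [this, hc'i₀, map_one, sub_self]
            · have : c' i = 0 := by rw [hc']; simp [hsupp i his]
              show σ (c' i) - c' i = 0
              rw [this, map_zero, sub_self])
          (by
            have : (∑ i, (σ (c' i) - c' i) • ((b i : (L ≃ₐ[K] L) → L)))
                = (∑ i, σ (c' i) • ((b i : (L ≃ₐ[K] L) → L)))
                  - ∑ i, c' i • ((b i : (L ≃ₐ[K] L) → L)) := by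
              rw [← Finset.sum_sub_distrib]
              congr 1
              funext i
              rw [sub_smul]
            rw [this, hσsum, hsum', sub_zero])
        intro i
        have := hd i
        exact sub_eq_zero.mp this
      have hbot : ∀ i, ∃ k : K, algebraMap K L k = c' i := by
        intro i
        have hmem : c' i ∈ IntermediateField.fixedField
            (IntermediateField.fixingSubgroup (⊥ : IntermediateField K L)) := by
          intro ϕ
          exact hfix ϕ.1 i
        rw [IsGalois.fixedField_fixingSubgroup (⊥ : IntermediateField K L)] at hmem
        exact IntermediateField.mem_bot.mp hmem
      choose k hk using hbot
      have hkrel : (∑ i, k i • b i) = 0 := by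
        apply Subtype.coe_injective
        push_cast
        calc ∑ i, k i • ((b i : (L ≃ₐ[K] L) → L))
            = ∑ i, c' i • ((b i : (L ≃ₐ[K] L) → L)) :=
              Finset.sum_congr rfl (fun i _ => by rw [← hk i, algebraMap_smul])
        _ = 0 := hsum'
      have hk0 := Fintype.linearIndependent_iff.mp hb k hkrel
      have : c' i₀ = 0 := by rw [← hk i₀, hk0 i₀, map_zero]
      rw [hc'i₀] at this
      exact one_ne_zero this
  intro c hsum i
  exact key Finset.univ c (by simp) hsum i


noncomputable def Phi (K L : Type*) [Field K] [Field L] [Algebra K L] :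
    (L ⊗[K] (galSubalg K L)) →ₐ[L] ((L ≃ₐ[K] L) → L) :=
  Algebra.TensorProduct.lift (Algebra.ofId L ((L ≃ₐ[K] L) → L)) ((galSubalg K L).val)
    (fun _ _ => Commute.all _ _)

lemma Phi_tmul (l : L) (f : galSubalg K L) :
    Phi K L (l ⊗ₜ f) = l • (f : (L ≃ₐ[K] L) → L) := by
  rw [Phi, Algebra.TensorProduct.lift_tmul]
  funext τ
  simp [Algebra.ofId_apply, Pi.algebraMap_apply]

lemma Phi_surj [FiniteDimensional K L] [IsGalois K L] :
    Function.Surjective (Phi K L) := by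
  intro v
  have hle : Submodule.span L ((galSubalg K L : Set ((L ≃ₐ[K] L) → L)))
      ≤ LinearMap.range (Phi K L).toLinearMap := by
    rw [Submodule.span_le]
    rintro f hf
    exact ⟨(1 : L) ⊗ₜ ⟨f, hf⟩, by rw [AlgHom.toLinearMap_apply, Phi_tmul, one_smul]⟩
  have := hle (span_top (K := K) (L := L) ▸ Submodule.mem_top (x := v))
  exact this

lemma Phi_inj [FiniteDimensional K L] [IsGalois K L] :
    Function.Injective (Phi K L) := by
  haveI : FiniteDimensional K (galSubalg K L) := by
    infer_instance
  set b := Module.finBasis K (galSubalg K L) with hb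
  set bc := b.baseChange L with hbc
  rw [injective_iff_map_eq_zero]
  intro x hx
  have hrep := bc.sum_repr x
  have h2 : ∀ i, bc.repr x i = 0 := by
    apply Fintype.linearIndependent_iff.mp (li_of_ki b b.linearIndependent)
    calc ∑ i, bc.repr x i • ((b i : (L ≃ₐ[K] L) → L))
        = ∑ i, bc.repr x i • (Phi K L (bc i)) :=
          Finset.sum_congr rfl (fun i _ => by
            rw [hbc, Module.Basis.baseChange_apply, Phi_tmul, one_smul])
    _ = Phi K L (∑ i, bc.repr x i • bc i) := by
          rw [map_sum (Phi K L) (fun i => bc.repr x i • bc i) Finset.univ]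
          exact Finset.sum_congr rfl (fun i _ => (map_smul (Phi K L) _ _).symm)
    _ = Phi K L x := by rw [hrep]
    _ = 0 := hx
  calc x = ∑ i, bc.repr x i • bc i := hrep.symm
  _ = 0 := Finset.sum_eq_zero (fun i _ => by rw [h2 i, zero_smul])

lemma pi_char {ι : Type*} [Fintype ι] (χ : ((ι → L)) →ₐ[L] L) :
    ∃ g : ι, ∀ v : ι → L, χ v = v g := by
  classical
  have h1 : ∑ i, χ (Pi.single i (1 : L)) = 1 := by
    rw [← map_sum]
    have h1' : (∑ i, Pi.single i ((1 : ι → L) i)) = (1 : ι → L) := Finset.univ_sum_single 1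
    simp only [Pi.one_apply] at h1'
    rw [h1', map_one]
  obtain ⟨g, hg⟩ : ∃ g, χ (Pi.single g (1 : L)) ≠ 0 := by
    by_contra hall
    push_neg at hall
    rw [Finset.sum_congr rfl (fun i _ => hall i)] at h1
    simp at h1
  have hsingle_mul : ∀ i j : ι, ((Pi.single i (1 : L) : ι → L)) * (Pi.single j (1 : L) : ι → L)
      = if i = j then (Pi.single i (1 : L) : ι → L) else 0 := by
    intro i j
    funext a
    by_cases hij : i = j
    · subst hij
      by_cases ha : a = i <;> simp [ha, Pi.single_apply]
    · rcases eq_or_ne a i with ha | ha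
      · rcases eq_or_ne a j with ha' | ha'
        · exact absurd (ha.symm.trans ha') hij
        · simp [ha, ha', Pi.single_apply, hij]
      · simp [ha, Pi.single_apply, hij]
  have hidem : χ (Pi.single g (1 : L)) = 1 := by
    have h2 : χ (Pi.single g (1 : L)) * χ (Pi.single g (1 : L)) = χ (Pi.single g (1 : L)) := by
      rw [← map_mul, hsingle_mul, if_pos rfl]
    exact mul_left_cancel₀ hg (by rw [h2, mul_one])
  refine ⟨g, fun v => ?_⟩
  have hzero : ∀ i, i ≠ g → χ (Pi.single i (1 : L)) = 0 := by
    intro i hi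
    have h3 : χ (Pi.single i (1 : L)) * χ (Pi.single g (1 : L)) = 0 := by
      rw [← map_mul, hsingle_mul, if_neg hi, map_zero]
    rwa [hidem, mul_one] at h3
  have hv : v = ∑ i, v i • (Pi.single i (1 : L) : ι → L) := by
    conv_lhs => rw [← Finset.univ_sum_single v]
    exact Finset.sum_congr rfl (fun i _ => by
      funext a
      by_cases ha : a = i <;> simp [ha, Pi.single_apply])
  conv_lhs => rw [hv]
  rw [map_sum]
  have : ∀ i, χ (v i • (Pi.single i (1 : L) : ι → L)) = v i * χ (Pi.single i (1 : L)) := by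
    intro i
    rw [map_smul, smul_eq_mul]
  rw [Finset.sum_congr rfl (fun i _ => this i)]
  rw [Finset.sum_eq_single g
    (fun i _ hi => by rw [hzero i hi, mul_zero])
    (fun h => absurd (Finset.mem_univ g) h)]
  rw [hidem, mul_one]

end BCI

/-- For `L/K` finite Galois, each `g ∈ Gal(L/K)` gives an
`L`-algebra homomorphism `ev_g : L ⊗_K A(L/K) → L` extending `f ↦ f g`, the map
`g ↦ ev_g` is a bijection onto the set of all `L`-algebra homomorphisms
`L ⊗_K A(L/K) → L`, and equivalently the natural map
`L ⊗_K A(L/K) → Maps(Gal(L/K), L)` is an isomorphism of `L`-algebras. -/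
theorem base_change_iso (K L : Type*) [Field K] [Field L] [Algebra K L]
    [FiniteDimensional K L] [IsGalois K L] :
    (∃ ev : (L ≃ₐ[K] L) → ((L ⊗[K] (galSubalg K L)) →ₐ[L] L),
      (∀ (g : L ≃ₐ[K] L) (f : galSubalg K L),
        ev g ((1 : L) ⊗ₜ f) = (f : (L ≃ₐ[K] L) → L) g) ∧
      Function.Bijective ev) ∧
    ∃ e : (L ⊗[K] (galSubalg K L)) ≃ₐ[L] ((L ≃ₐ[K] L) → L),
      ∀ (l : L) (f : galSubalg K L),
        e (l ⊗ₜ f) = l • (f : (L ≃ₐ[K] L) → L) := by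
  have hbij : Function.Bijective (BCI.Phi K L) := ⟨BCI.Phi_inj, BCI.Phi_surj⟩
  let e : (L ⊗[K] (galSubalg K L)) ≃ₐ[L] ((L ≃ₐ[K] L) → L) :=
    AlgEquiv.ofBijective _ hbij
  constructor
  · refine ⟨fun g => (Pi.evalAlgHom L (fun _ => L) g).comp (BCI.Phi K L), ?_, ?_, ?_⟩
    · intro g f
      show (BCI.Phi K L ((1 : L) ⊗ₜ f)) g = (f : (L ≃ₐ[K] L) → L) g
      rw [BCI.Phi_tmul, one_smul]
    · intro g g' hgg
      apply BCI.separates g g'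
      intro f
      have h1 := congrArg (fun χ : (L ⊗[K] (galSubalg K L)) →ₐ[L] L =>
        χ ((1 : L) ⊗ₜ[K] f)) hgg
      simpa [BCI.Phi_tmul] using h1
    · intro χ
      obtain ⟨g, hg⟩ := BCI.pi_char (χ.comp e.symm.toAlgHom)
      refine ⟨g, ?_⟩
      apply AlgHom.ext
      intro x
      have h1 := hg (BCI.Phi K L x)
      have h2 : e.symm (BCI.Phi K L x) = x := by
        have h3 : BCI.Phi K L x = e x := rfl
        rw [h3, e.symm_apply_apply]
      calc ((Pi.evalAlgHom L (fun _ => L) g).comp (BCI.Phi K L)) x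
          = (BCI.Phi K L x) g := rfl
      _ = (χ.comp e.symm.toAlgHom) (BCI.Phi K L x) := h1.symm
      _ = χ (e.symm (BCI.Phi K L x)) := rfl
      _ = χ x := by rw [h2]
  · exact ⟨e, fun l f => BCI.Phi_tmul l f⟩
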